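/- Let r ≥ 1 and n ≥ 1 be integers, a_r a real number, and l ≥ 1 an integer with 2l ≤ n+2. Then A(2l−1, n) + [𝔄(2l−1, n), 𝔸_r] = [ a_r^l · (2l−1)^{l−1}_{−2} · (n + 2 + r·l) / ( (n+2) · (n−2l+3)^{l}_{r+2} ) ] · A(−1, n+l·r), where [·,·] is the Lie bracket of vector fields. (Odd case of the lemma on eliminating A-terms by the homological operator of 𝔸_r.) -/

import Mathlib

/-- Monomial `x^a * y^b` for integer exponents, zero if an exponent is negative. -/
noncomputable def M (a b : ℤ) : ℝ × ℝ → ℝ :=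
  fun p => if 0 ≤ a ∧ 0 ≤ b then p.1 ^ a.toNat * p.2 ^ b.toNat else 0

/-- The vector field `A(l,k)`. -/
noncomputable def A (l k : ℤ) : ℝ × ℝ → ℝ × ℝ :=
  fun p => (((k : ℝ) - (l : ℝ) + 1) / ((k : ℝ) + 2) * M (l + 1) (k - l) p,
            -(((l : ℝ) + 1) / ((k : ℝ) + 2)) * M l (k - l + 1) p)

/-- The vector field `B(l,k)`. -/
noncomputable def B (l k : ℤ) : ℝ × ℝ → ℝ × ℝ :=
  fun p => (M (l + 1) (k - l) p, M l (k - l + 1) p)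

/-- The scalar monomial function `Z(l,k)`. -/
noncomputable def Z (l k : ℤ) : ℝ × ℝ → ℝ := M l (k - l)

/-- Lie bracket of planar vector fields: `[X,Y](p) = DY(p)(X(p)) - DX(p)(Y(p))`. -/
noncomputable def lieBracket (X Y : ℝ × ℝ → ℝ × ℝ) : ℝ × ℝ → ℝ × ℝ :=
  fun p => fderiv ℝ Y p (X p) - fderiv ℝ X p (Y p)

/-- Pochhammer-type product `(a)^n_b = a (a+b) (a+2b) ⋯ (a+(n-1)b)`. -/
noncomputable def poch (a b : ℝ) (n : ℕ) : ℝ := ∏ j ∈ Finset.range n, (a + (j : ℝ) * b)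

/-- The vector field `𝔸_r = A(1,0) + a_r • A(-1,r)`, i.e. `(a_r y^{r+1}, -x)`. -/
noncomputable def bbA (r : ℤ) (ar : ℝ) : ℝ × ℝ → ℝ × ℝ :=
  fun p => A 1 0 p + ar • A (-1) r p

/-- The vector field `𝔄(m,n)` used to eliminate A-terms. -/
noncomputable def frakA (r : ℤ) (ar : ℝ) (m n : ℤ) : ℝ × ℝ → ℝ × ℝ :=
  fun p => ∑ i ∈ Finset.range ((m / 2).toNat + 1),
    (-(ar ^ i * poch (m : ℝ) (-2) i * ((n : ℝ) + (i : ℝ) * (r : ℝ) + 2)) /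
      (((n : ℝ) + 2) * poch ((n : ℝ) - (m : ℝ) + 2) ((r : ℝ) + 2) (i + 1))) •
    A (m - (2 * (i : ℤ) + 1)) (n + (i : ℤ) * r) p

noncomputable def Dm (i j : ℕ) (p : ℝ × ℝ) : ℝ × ℝ →L[ℝ] ℝ :=
  ((i:ℝ) * p.1^(i-1) * p.2^j) • ContinuousLinearMap.fst ℝ ℝ ℝ
  + ((j:ℝ) * p.1^i * p.2^(j-1)) • ContinuousLinearMap.snd ℝ ℝ ℝ

lemma hasFDerivAt_mon (i j : ℕ) (p : ℝ × ℝ) :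
    HasFDerivAt (fun q : ℝ × ℝ => q.1^i * q.2^j) (Dm i j p) p := by
  have h1 : HasFDerivAt (fun q : ℝ × ℝ => q.1^i)
      (((i:ℝ) * p.1^(i-1)) • ContinuousLinearMap.fst ℝ ℝ ℝ) p :=
    (hasDerivAt_pow i p.1).comp_hasFDerivAt p hasFDerivAt_fst
  have h2 : HasFDerivAt (fun q : ℝ × ℝ => q.2^j)
      (((j:ℝ) * p.2^(j-1)) • ContinuousLinearMap.snd ℝ ℝ ℝ) p :=
    (hasDerivAt_pow j p.2).comp_hasFDerivAt p hasFDerivAt_snd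
  have h := h1.mul h2
  refine h.congr_fderiv ?_
  ext v <;> simp [Dm] <;> ring

noncomputable def DV (c1 : ℝ) (i1 j1 : ℕ) (c2 : ℝ) (i2 j2 : ℕ) (p : ℝ × ℝ) :
    ℝ × ℝ →L[ℝ] ℝ × ℝ := (c1 • Dm i1 j1 p).prod (c2 • Dm i2 j2 p)

lemma hasFDerivAt_field (c1 : ℝ) (i1 j1 : ℕ) (c2 : ℝ) (i2 j2 : ℕ) (p : ℝ × ℝ) :
    HasFDerivAt (fun q : ℝ × ℝ => (c1 * (q.1^i1 * q.2^j1), c2 * (q.1^i2 * q.2^j2)))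
      (DV c1 i1 j1 c2 i2 j2 p) p :=
  (HasFDerivAt.prodMk ((hasFDerivAt_mon i1 j1 p).const_mul c1) ((hasFDerivAt_mon i2 j2 p).const_mul c2))

lemma M_nat (a b : ℕ) (p : ℝ × ℝ) : M (a:ℤ) (b:ℤ) p = p.1 ^ a * p.2 ^ b := by
  simp [M]

lemma A_nat (a b : ℕ) : A (a:ℤ) ((a:ℤ)+(b:ℤ)) = fun p : ℝ × ℝ =>
    (((b:ℝ)+1)/((a:ℝ)+(b:ℝ)+2) * (p.1^(a+1) * p.2^b),
     -(((a:ℝ)+1)/((a:ℝ)+(b:ℝ)+2)) * (p.1^a * p.2^(b+1))) := by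
  funext p
  have e1 : (a:ℤ)+(b:ℤ)-(a:ℤ) = (b:ℤ) := by ring
  have e2 : (a:ℤ)+1 = ((a+1:ℕ):ℤ) := by push_cast; ring
  have e4 : (b:ℤ)+1 = ((b+1:ℕ):ℤ) := by push_cast; ring
  simp only [A, e1, e2, e4, M_nat, Prod.mk.injEq]
  push_cast
  constructor <;> ring_nf

lemma bbA_nat (ρ : ℕ) (ar : ℝ) : bbA (ρ:ℤ) ar = fun p : ℝ × ℝ =>
    (ar * (p.1^0 * p.2^(ρ+1)), -(1:ℝ) * (p.1^1 * p.2^0)) := by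
  funext p
  have h2 : ((ρ:ℝ)+2) ≠ 0 := by positivity
  have hc : (0:ℤ) ≤ (ρ:ℤ)+1 := by positivity
  simp only [bbA, A, M]
  norm_num
  rw [if_pos hc, show ((ρ:ℝ)+1+1) = (ρ:ℝ)+2 from by ring, div_self h2]
  ring

/-- value of `A(a+1, a+b)` (possibly `b = 0`). -/
lemma A_raise (a b : ℕ) (p : ℝ × ℝ) : A ((a:ℤ)+1) ((a:ℤ)+(b:ℤ)) p =
    ((b:ℝ)/((a:ℝ)+(b:ℝ)+2) * (p.1^(a+2) * p.2^(b-1)),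
     -(((a:ℝ)+2)/((a:ℝ)+(b:ℝ)+2)) * (p.1^(a+1) * p.2^b)) := by
  match b with
  | 0 =>
    have e1 : (a:ℤ)+(0:ℕ) - ((a:ℤ)+1) = -1 := by push_cast; ring
    have e2 : (a:ℤ)+1+1 = ((a+2:ℕ):ℤ) := by push_cast; ring
    have e3 : (a:ℤ)+(0:ℕ) - ((a:ℤ)+1) + 1 = ((0:ℕ):ℤ) := by push_cast; ring
    have e5 : (a:ℤ)+1 = ((a+1:ℕ):ℤ) := by push_cast; ring
    have t1 : ((a:ℤ)+1).toNat = a+1 := by omega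
    simp only [A, M, show ((a:ℤ)+(0:ℕ) - ((a:ℤ)+1)) = -1 from by push_cast; ring,
      Prod.mk.injEq]
    norm_num [t1]
    rw [if_pos (show (0:ℤ) ≤ (a:ℤ)+1 by positivity)]
    push_cast
    ring_nf
  | (b'+1) =>
    have e2 : (a:ℤ)+1+1 = ((a+2:ℕ):ℤ) := by push_cast; ring
    have e1 : (a:ℤ)+((b'+1:ℕ):ℤ) - ((a:ℤ)+1) = ((b':ℕ):ℤ) := by push_cast; ring
    have e3 : (a:ℤ)+((b'+1:ℕ):ℤ) - ((a:ℤ)+1) + 1 = ((b'+1:ℕ):ℤ) := by push_cast; ring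
    have e5 : (a:ℤ)+1 = ((a+1:ℕ):ℤ) := by push_cast; ring
    have t1 : ((a:ℤ)+1).toNat = a+1 := by omega
    have t2 : ((a:ℤ)+1+1).toNat = a+2 := by omega
    have t3 : ((b':ℕ):ℤ).toNat = b' := by omega
    have t4 : (((b'+1:ℕ)):ℤ).toNat = b'+1 := by omega
    simp only [A, M, e1, e3, Prod.mk.injEq]
    norm_num [t1, t2, t3, t4]
    constructor
    · intro h; omega
    · rw [if_pos ⟨show (0:ℤ) ≤ (a:ℤ)+1 by positivity, show (0:ℤ) ≤ (b':ℤ)+1 by positivity⟩]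
      push_cast
      ring_nf

/-- value of `A(a-1, a+c)` (possibly `a = 0`). -/
lemma A_lower (a c : ℕ) (p : ℝ × ℝ) : A ((a:ℤ)-1) ((a:ℤ)+(c:ℤ)) p =
    (((c:ℝ)+2)/((a:ℝ)+(c:ℝ)+2) * (p.1^a * p.2^(c+1)),
     -((a:ℝ)/((a:ℝ)+(c:ℝ)+2)) * (p.1^(a-1) * p.2^(c+2))) := by
  have e1 : (a:ℤ)-1+1 = (a:ℤ) := by ring
  have e2 : (a:ℤ)+(c:ℤ) - ((a:ℤ)-1) = ((c+1:ℕ):ℤ) := by push_cast; ring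
  have e3 : (a:ℤ)+(c:ℤ) - ((a:ℤ)-1) + 1 = ((c+2:ℕ):ℤ) := by push_cast; ring
  match a with
  | 0 =>
    simp only [A, e1, e2, e3, M, Prod.mk.injEq]
    norm_num
    try rw [if_pos (show (0:ℤ) ≤ ((c:ℤ)+1) by positivity)]
    try rw [show ((c:ℤ)+1).toNat = c+1 from by omega]
    push_cast; ring_nf
  | (a'+1) =>
    simp only [A, e1, e2, e3, M, Prod.mk.injEq]
    have t1 : (((a'+1:ℕ)):ℤ).toNat = a'+1 := by omega
    have t2 : (((a'+1:ℕ)):ℤ) - 1 = ((a':ℕ):ℤ) := by push_cast; ring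
    have t3 : (((c+1:ℕ)):ℤ).toNat = c+1 := by omega
    have t4 : (((c+2:ℕ)):ℤ).toNat = c+2 := by omega
    rw [t2]
    rw [if_pos ⟨by positivity, by positivity⟩, if_pos ⟨by positivity, by positivity⟩]
    have t5 : (((c+1:ℕ)):ℤ)+1 = ((c+2:ℕ):ℤ) := by push_cast; ring
    rw [t5, t1, t3, t4, show ((a':ℕ):ℤ).toNat = a' from by omega]
    simp only [Nat.add_sub_cancel]
    constructor <;> · push_cast; ring_nf

set_option maxHeartbeats 2000000 in
lemma bracket_nat (a b ρ : ℕ) (ar : ℝ) (p : ℝ × ℝ) :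
    lieBracket (A (a:ℤ) ((a:ℤ)+(b:ℤ))) (bbA (ρ:ℤ) ar) p
      = ((b:ℝ)+1) • A ((a:ℤ)+1) ((a:ℤ)+(b:ℤ)) p
        - (ar * ((a:ℝ)+1) * ((a:ℝ)+(b:ℝ)+(ρ:ℝ)+2) / ((a:ℝ)+(b:ℝ)+2)) •
          A ((a:ℤ)-1) ((a:ℤ)+(b:ℤ)+(ρ:ℤ)) p := by
  have hab : ((a:ℝ)+(b:ℝ)+2) ≠ 0 := by positivity
  have habr : ((a:ℝ)+(b:ℝ)+(ρ:ℝ)+2) ≠ 0 := by positivity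
  rw [lieBracket, A_nat, bbA_nat]
  rw [(hasFDerivAt_field ar 0 (ρ+1) (-1) 1 0 p).fderiv,
      (hasFDerivAt_field (((b:ℝ)+1)/((a:ℝ)+(b:ℝ)+2)) (a+1) b
        (-(((a:ℝ)+1)/((a:ℝ)+(b:ℝ)+2))) a (b+1) p).fderiv]
  rw [show (a:ℤ)+(b:ℤ)+(ρ:ℤ) = (a:ℤ)+((b+ρ:ℕ):ℤ) from by push_cast; ring]
  rw [A_raise, A_lower]
  simp only [DV, Dm, ContinuousLinearMap.prod_apply, ContinuousLinearMap.add_apply,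
    ContinuousLinearMap.coe_smul', Pi.smul_apply, ContinuousLinearMap.coe_fst',
    ContinuousLinearMap.coe_snd', smul_eq_mul, Prod.smul_mk, Prod.mk_sub_mk, Prod.mk.injEq]
  push_cast
  constructor
  · field_simp
    ring_nf
  · have habr' : ((a:ℝ)+((b:ℝ)+(ρ:ℝ))+2) ≠ 0 := by positivity
    field_simp
    ring_nf

lemma differentiable_A (a b : ℕ) : Differentiable ℝ (A (a:ℤ) ((a:ℤ)+(b:ℤ))) := by
  intro p
  rw [A_nat]
  exact (hasFDerivAt_field _ (a+1) b _ a (b+1) p).differentiableAt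

lemma bracket_int (m k r : ℤ) (hm : 0 ≤ m) (hk : m ≤ k) (hr : 0 ≤ r) (ar : ℝ) (p : ℝ × ℝ) :
    lieBracket (A m k) (bbA r ar) p
      = ((k:ℝ) - (m:ℝ) + 1) • A (m+1) k p
        - (ar * ((m:ℝ)+1) * ((k:ℝ)+(r:ℝ)+2) / ((k:ℝ)+2)) • A (m-1) (k+r) p := by
  obtain ⟨a, rfl⟩ := Int.eq_ofNat_of_zero_le hm
  obtain ⟨b, hb⟩ := Int.eq_ofNat_of_zero_le (by omega : (0:ℤ) ≤ k - a)
  obtain ⟨ρ, rfl⟩ := Int.eq_ofNat_of_zero_le hr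
  have hk' : k = (a:ℤ) + (b:ℤ) := by omega
  subst hk'
  have := bracket_nat a b ρ ar p
  convert this using 3 <;> push_cast <;> ring

lemma lieBracket_sum_smul {ι : Type*} (s : Finset ι) (c : ι → ℝ) (V : ι → ℝ × ℝ → ℝ × ℝ)
    (X : ℝ × ℝ → ℝ × ℝ) (hV : ∀ i ∈ s, Differentiable ℝ (V i)) (p : ℝ × ℝ) :
    lieBracket (fun q => ∑ i ∈ s, c i • V i q) X p
      = ∑ i ∈ s, c i • lieBracket (V i) X p := by
  have hd : ∀ i ∈ s, DifferentiableAt ℝ (fun q => c i • V i q) p :=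
    fun i hi => ((hV i hi) p).const_smul (c i)
  rw [lieBracket]
  rw [fderiv_fun_sum hd]
  simp only [ContinuousLinearMap.sum_apply]
  have h1 : ∀ i ∈ s, fderiv ℝ (fun q => c i • V i q) p = c i • fderiv ℝ (V i) p :=
    fun i hi => fderiv_const_smul ((hV i hi) p) (c i)
  rw [map_sum, ← Finset.sum_sub_distrib]
  refine Finset.sum_congr rfl fun i hi => ?_
  rw [h1 i hi, lieBracket, map_smul]
  simp [smul_sub]

lemma poch_succ (a b : ℝ) (n : ℕ) : poch a b (n+1) = poch a b n * (a + (n:ℝ)*b) :=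
  Finset.prod_range_succ _ n

lemma poch_pos (a b : ℝ) (ha : 0 < a) (hb : 0 ≤ b) (n : ℕ) : 0 < poch a b n :=
  Finset.prod_pos fun j _ => by
    have : (0:ℝ) ≤ (j:ℝ)*b := mul_nonneg (by positivity) hb
    linarith

lemma differentiable_A_int (m k : ℤ) (hm : 0 ≤ m) (hk : m ≤ k) :
    Differentiable ℝ (A m k) := by
  obtain ⟨a, rfl⟩ := Int.eq_ofNat_of_zero_le hm
  obtain ⟨b, hb⟩ := Int.eq_ofNat_of_zero_le (by omega : (0:ℤ) ≤ k - a)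
  have hk' : k = (a:ℤ) + (b:ℤ) := by omega
  subst hk'
  exact differentiable_A a b

/-- Odd case: `A(2l-1,n) + [𝔄(2l-1,n), 𝔸_r]` is a multiple of `A(-1, n+lr)`. -/
theorem stmt5 (r n : ℤ) (ar : ℝ) (l : ℕ) (hr : 1 ≤ r) (hn : 1 ≤ n) (hl : 1 ≤ l)
    (hln : 2 * (l : ℤ) ≤ n + 2) :
    (fun p => A (2 * (l : ℤ) - 1) n p
        + lieBracket (frakA r ar (2 * (l : ℤ) - 1) n) (bbA r ar) p)
      = fun p =>
        (ar ^ l * poch (2 * (l : ℝ) - 1) (-2) (l - 1) * ((n : ℝ) + 2 + (r : ℝ) * (l : ℝ)) /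
          (((n : ℝ) + 2) * poch ((n : ℝ) - 2 * (l : ℝ) + 3) ((r : ℝ) + 2) l)) •
        A (-1) (n + (l : ℤ) * r) p := by
  funext p
  -- basic positivity facts
  have hn1 : (1:ℝ) ≤ (n:ℝ) := by exact_mod_cast hn
  have hr1 : (1:ℝ) ≤ (r:ℝ) := by exact_mod_cast hr
  have hl1 : (1:ℝ) ≤ (l:ℝ) := by exact_mod_cast hl
  have hln' : 2*(l:ℝ) ≤ (n:ℝ)+2 := by exact_mod_cast hln
  have hN : (0:ℝ) < (n:ℝ)+2 := by linarith
  have hQB : (0:ℝ) < (n:ℝ) - (2*(l:ℝ)-1) + 2 := by linarith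
  have hQ : ∀ j : ℕ, 0 < poch ((n:ℝ) - (2*(l:ℝ)-1) + 2) ((r:ℝ)+2) j :=
    fun j => poch_pos _ _ hQB (by linarith) j
  have hNIR : ∀ i : ℕ, (0:ℝ) < (n:ℝ) + (i:ℝ)*(r:ℝ) + 2 := by
    intro i
    have : (0:ℝ) ≤ (i:ℝ)*(r:ℝ) := mul_nonneg (by positivity) (by linarith)
    linarith
  -- notation
  set G : ℕ → ℝ := fun j =>
    -(ar^j * poch (2*(l:ℝ)-1) (-2) j * ((n:ℝ)+(j:ℝ)*(r:ℝ)+2)) /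
      (((n:ℝ)+2) * poch ((n:ℝ) - (2*(l:ℝ)-1) + 2) ((r:ℝ)+2) j) with hG
  set T : ℕ → ℝ × ℝ := fun j => A ((2*(l:ℤ)-1) - 2*(j:ℤ)) (n + (j:ℤ)*r) p with hT
  -- step 1: expand frakA as a sum of smuls
  have hidx : ((2*(l:ℤ)-1) / 2).toNat + 1 = l := by omega
  have hcast : (((2*(l:ℤ)-1 : ℤ)):ℝ) = 2*(l:ℝ)-1 := by push_cast; ring
  have hfr : frakA r ar (2*(l:ℤ)-1) n = fun q => ∑ i ∈ Finset.range l,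
      (-(ar ^ i * poch (2*(l:ℝ)-1) (-2) i * ((n : ℝ) + (i : ℝ) * (r : ℝ) + 2)) /
        (((n : ℝ) + 2) * poch ((n : ℝ) - (2*(l:ℝ)-1) + 2) ((r : ℝ) + 2) (i + 1))) •
      A ((2*(l:ℤ)-1) - (2 * (i : ℤ) + 1)) (n + (i : ℤ) * r) q := by
    funext q
    rw [frakA, hidx, hcast]
  have hdiff : ∀ i ∈ Finset.range l,
      Differentiable ℝ (A ((2*(l:ℤ)-1) - (2 * (i : ℤ) + 1)) (n + (i : ℤ) * r)) := by
    intro i hi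
    have hi' : (i:ℤ) < l := by exact_mod_cast Finset.mem_range.mp hi
    have h0 : (0:ℤ) ≤ (i:ℤ)*r := mul_nonneg (by positivity) (by omega)
    exact differentiable_A_int _ _ (by omega) (by omega)
  rw [hfr, lieBracket_sum_smul _ _ _ _ hdiff p]
  -- step 2: each summand telescopes
  have hsummand : ∀ i ∈ Finset.range l,
      (-(ar ^ i * poch (2*(l:ℝ)-1) (-2) i * ((n : ℝ) + (i : ℝ) * (r : ℝ) + 2)) /
        (((n : ℝ) + 2) * poch ((n : ℝ) - (2*(l:ℝ)-1) + 2) ((r : ℝ) + 2) (i + 1))) •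
        lieBracket (A ((2*(l:ℤ)-1) - (2 * (i : ℤ) + 1)) (n + (i : ℤ) * r)) (bbA r ar) p
      = G i • T i - G (i+1) • T (i+1) := by
    intro i hi
    have hi' : (i:ℤ) < l := by exact_mod_cast Finset.mem_range.mp hi
    have h0 : (0:ℤ) ≤ (i:ℤ)*r := mul_nonneg (by positivity) (by omega)
    rw [bracket_int _ _ r (by omega) (by omega) (by omega) ar p]
    have e1 : (2*(l:ℤ)-1) - (2*(i:ℤ)+1) + 1 = (2*(l:ℤ)-1) - 2*(i:ℤ) := by ring
    have e2 : (2*(l:ℤ)-1) - (2*(i:ℤ)+1) - 1 = (2*(l:ℤ)-1) - 2*((i:ℤ)+1) := by ring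
    have e3 : n + (i:ℤ)*r + r = n + ((i:ℤ)+1)*r := by ring
    have e4 : ((i:ℤ)+1) = (((i+1:ℕ)):ℤ) := by push_cast; ring
    rw [e1, e2, e3, e4]
    rw [smul_sub, smul_smul, smul_smul]
    rw [hT]
    congr 1
    · congr 1
      -- coefficient identity 1
      rw [hG]
      have hQi := hQ i
      have hfac : (0:ℝ) < ((n:ℝ) - (2*(l:ℝ)-1) + 2) + (i:ℝ)*((r:ℝ)+2) := by
        have : (0:ℝ) ≤ (i:ℝ)*((r:ℝ)+2) := mul_nonneg (by positivity) (by linarith)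
        linarith
      rw [poch_succ]
      push_cast
      field_simp
      ring
    · congr 1
      -- coefficient identity 2
      rw [hG]
      beta_reduce
      have hQi := hQ (i+1)
      have hNIRi := hNIR i
      rw [show poch (2*(l:ℝ)-1) (-2) (i+1) = poch (2*(l:ℝ)-1) (-2) i * ((2*(l:ℝ)-1) + (i:ℝ)*(-2))
        from poch_succ _ _ i]
      push_cast
      field_simp
      ring
  rw [Finset.sum_congr rfl hsummand]
  rw [Finset.sum_range_sub' (fun j => G j • T j) l]
  -- step 3: assemble
  have hT0 : T 0 = A (2*(l:ℤ)-1) n p := by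
    rw [hT]; beta_reduce; norm_num
  have hG0 : G 0 = -1 := by
    rw [hG]
    beta_reduce
    simp [poch]
    field_simp
    ring
  have hTl : T l = A (-1) (n + (l:ℤ)*r) p := by
    rw [hT]
    beta_reduce
    rw [show (2*(l:ℤ)-1 - 2*((l:ℕ):ℤ)) = -1 from by ring]
  rw [hT0, hG0, hTl]
  have hcoef : -(G l) = ar ^ l * poch (2 * (l : ℝ) - 1) (-2) (l - 1) * ((n : ℝ) + 2 + (r : ℝ) * (l : ℝ)) /
      (((n : ℝ) + 2) * poch ((n : ℝ) - 2 * (l : ℝ) + 3) ((r : ℝ) + 2) l) := by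
    obtain ⟨l', rfl⟩ : ∃ l', l = l'+1 := ⟨l-1, by omega⟩
    rw [hG]
    simp only [Nat.add_sub_cancel]
    rw [show poch (2*((l'+1:ℕ):ℝ)-1) (-2) (l'+1)
        = poch (2*((l'+1:ℕ):ℝ)-1) (-2) l' * ((2*((l'+1:ℕ):ℝ)-1) + (l':ℝ)*(-2))
      from poch_succ _ _ l']
    rw [show ((n:ℝ) - (2*((l'+1:ℕ):ℝ)-1) + 2) = ((n:ℝ) - 2*((l'+1:ℕ):ℝ) + 3) from by ring]
    have hQl := poch_pos ((n:ℝ) - 2*((l'+1:ℕ):ℝ) + 3) ((r:ℝ)+2)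
      (by push_cast at hQB ⊢; linarith) (by linarith) (l'+1)
    push_cast
    field_simp
    ring
  rw [← hcoef]
  module
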